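/- arXiv:1809.01276 — 5 statements merged into one kernel-verified Lean document; each statement's English description precedes it below -/
import Mathlib

section
/- Let n ≥ 1 and let U ⊆ ℂⁿ × ℂ be a connected open set such that U ∩ H is nonempty, where H = {(z,w) ∈ ℂⁿ × ℂ : Im w = 0}. If h : U → ℂ is holomorphic on U and h vanishes at every point of U ∩ H, then h vanishes identically on U. (Uniqueness across the real hypersurface ℂⁿ × ℝ; this is the identity-theorem step used in the proof of the paper's Proposition 2.4.) -/
/-- One-variable slice lemma: if `h` is holomorphic on an open set `V ⊆ E`,
vanishes in a neighborhood of `q`, and the complex line from `q` to `r`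
(blown up to radius 3/2) stays in `V`, then `h r = 0`. -/
lemma slice_vanish {E : Type*} [NormedAddCommGroup E] [NormedSpace ℂ E]
    {V : Set E} (hV : IsOpen V) {h : E → ℂ} (hh : DifferentiableOn ℂ h V)
    {q r : E} (hmaps : ∀ t : ℂ, t ∈ Metric.ball (0 : ℂ) (3/2) → q + t • (r - q) ∈ V)
    (hq : ∀ᶠ x in nhds q, h x = 0) : h r = 0 := by
  set g : ℂ → ℂ := fun t => h (q + t • (r - q)) with hg
  have hgdiff : DifferentiableOn ℂ g (Metric.ball (0 : ℂ) (3/2)) := by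
    have hline : DifferentiableOn ℂ (fun t : ℂ => q + t • (r - q)) (Metric.ball (0 : ℂ) (3/2)) :=
      (differentiableOn_const q).add (differentiableOn_id.smul_const (r - q))
    exact hh.comp hline hmaps
  have hgAn : AnalyticOnNhd ℂ g (Metric.ball (0 : ℂ) (3/2)) :=
    hgdiff.analyticOnNhd Metric.isOpen_ball
  have hg0 : ∀ᶠ t in nhds (0 : ℂ), g t = 0 := by
    have hc : Continuous (fun t : ℂ => q + t • (r - q)) := by continuity
    have : Filter.Tendsto (fun t : ℂ => q + t • (r - q)) (nhds 0) (nhds q) := by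
      have := hc.tendsto 0
      simpa using this
    exact this.eventually hq
  have hfreq : ∃ᶠ t in nhdsWithin (0 : ℂ) {(0 : ℂ)}ᶜ, g t = 0 :=
    (hg0.filter_mono nhdsWithin_le_nhds).frequently
  have hzero : Set.EqOn g 0 (Metric.ball (0 : ℂ) (3/2)) :=
    hgAn.eqOn_zero_of_preconnected_of_frequently_eq_zero
      (convex_ball (0 : ℂ) (3/2)).isPreconnected (Metric.mem_ball_self (by norm_num)) hfreq
  have h1 : (1 : ℂ) ∈ Metric.ball (0 : ℂ) (3/2) := by
    rw [Metric.mem_ball, dist_zero_right, norm_one]; norm_num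
  have := hzero h1
  simpa [hg] using this

/-- Identity theorem across the real hypersurface ℂⁿ × ℝ: a holomorphic
function on a connected open set `U ⊆ ℂⁿ × ℂ` that vanishes on
`U ∩ {Im w = 0}` (assumed nonempty) vanishes identically on `U`. -/
theorem vanishing_on_flat_hypersurface (n : ℕ) (hn : 1 ≤ n)
    (U : Set ((Fin n → ℂ) × ℂ)) (hUopen : IsOpen U) (hUconn : IsConnected U)
    (hne : (U ∩ {p : (Fin n → ℂ) × ℂ | p.2.im = 0}).Nonempty)
    (h : (Fin n → ℂ) × ℂ → ℂ) (hh : DifferentiableOn ℂ h U)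
    (hvan : ∀ p ∈ U ∩ {p : (Fin n → ℂ) × ℂ | p.2.im = 0}, h p = 0) :
    ∀ p ∈ U, h p = 0 := by
  classical
  set S : Set ((Fin n → ℂ) × ℂ) := {p | ∀ᶠ q in nhds p, h q = 0} with hS
  have hSopen : IsOpen S := isOpen_setOf_eventually_nhds
  -- p₀ ∈ S : vanishing in a neighborhood of a point of the hypersurface
  obtain ⟨p₀, hp₀U, hp₀H⟩ := hne
  have hp₀im : p₀.2.im = 0 := hp₀H
  obtain ⟨ε, hε, hball⟩ := Metric.isOpen_iff.1 hUopen p₀ hp₀U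
  have hsub : Metric.ball p₀.1 ε ×ˢ Metric.ball p₀.2 ε ⊆ U := by
    rw [ball_prod_same]; exact hball
  have hzero : ∀ p ∈ Metric.ball p₀ ε, h p = 0 := by
    rintro ⟨z, w⟩ hp
    rw [← ball_prod_same] at hp
    obtain ⟨hz, hw⟩ := hp
    set g : ℂ → ℂ := fun w => h (z, w) with hg
    have hgdiff : DifferentiableOn ℂ g (Metric.ball p₀.2 ε) := by
      have hline : DifferentiableOn ℂ (fun w : ℂ => ((z, w) : (Fin n → ℂ) × ℂ))
          (Metric.ball p₀.2 ε) :=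
        (differentiableOn_const z).prodMk differentiableOn_id
      exact hh.comp hline (fun w hwb => hsub ⟨hz, hwb⟩)
    have hgAn : AnalyticOnNhd ℂ g (Metric.ball p₀.2 ε) :=
      hgdiff.analyticOnNhd Metric.isOpen_ball
    have hfreq : ∃ᶠ w in nhdsWithin p₀.2 {p₀.2}ᶜ, g w = 0 := by
      rw [Filter.frequently_iff]
      intro s hs
      obtain ⟨δ, hδ, hδs⟩ := Metric.mem_nhdsWithin_iff.1 hs
      have hmin : (0 : ℝ) < min δ ε := lt_min hδ hε
      refine ⟨p₀.2 + (min δ ε / 2 : ℝ), hδs ⟨?_, ?_⟩, ?_⟩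
      · rw [Metric.mem_ball, Complex.dist_eq]
        simp only [add_sub_cancel_left]
        rw [Complex.norm_real, Real.norm_eq_abs, abs_of_pos (by positivity)]
        have := min_le_left δ ε; linarith
      · simp only [Set.mem_compl_iff, Set.mem_singleton_iff]
        intro hcontra
        have h0 : ((min δ ε / 2 : ℝ) : ℂ) = 0 := by
          have := congrArg (· - p₀.2) hcontra
          simpa using this
        have : (min δ ε / 2 : ℝ) = 0 := by exact_mod_cast h0
        linarith
      · apply hvan
        constructor
        · apply hsub
          refine ⟨hz, ?_⟩
          rw [Metric.mem_ball, Complex.dist_eq]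
          simp only [add_sub_cancel_left]
          rw [Complex.norm_real, Real.norm_eq_abs, abs_of_pos (by positivity)]
          have := min_le_right δ ε; linarith
        · show (p₀.2 + ((min δ ε / 2 : ℝ) : ℂ)).im = 0
          simp [hp₀im]
    have hgzero : Set.EqOn g 0 (Metric.ball p₀.2 ε) :=
      hgAn.eqOn_zero_of_preconnected_of_frequently_eq_zero
        (convex_ball p₀.2 ε).isPreconnected (Metric.mem_ball_self hε) hfreq
    exact hgzero hw
  have hp₀S : p₀ ∈ S :=
    Filter.eventually_of_mem (Metric.ball_mem_nhds p₀ hε) hzero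
  -- closure S ∩ U ⊆ S : propagation along complex lines
  have hclos : closure S ∩ U ⊆ S := by
    rintro p ⟨hpc, hpU⟩
    obtain ⟨ρ, hρ, hρball⟩ := Metric.isOpen_iff.1 hUopen p hpU
    obtain ⟨q, hqS, hqd⟩ := Metric.mem_closure_iff.1 hpc (ρ / 4) (by positivity)
    have hqd' : dist q p < ρ / 4 := by rwa [dist_comm] at hqd
    have hr : ∀ r ∈ Metric.ball p (ρ / 4), h r = 0 := by
      intro r hrb
      refine slice_vanish hUopen hh (q := q) (r := r) ?_ hqS
      intro t ht
      apply hρball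
      rw [Metric.mem_ball] at *
      have h1 : dist (q + t • (r - q)) q = ‖t‖ * dist r q := by
        rw [dist_eq_norm]
        simp [norm_smul, dist_eq_norm]
      have h2 : dist r q < ρ / 2 :=
        lt_of_le_of_lt (dist_triangle r p q) (by rw [dist_comm q p] at hqd'; linarith)
      calc dist (q + t • (r - q)) p ≤ dist (q + t • (r - q)) q + dist q p :=
            dist_triangle _ _ _
        _ = ‖t‖ * dist r q + dist q p := by rw [h1]
        _ < (3/2) * (ρ / 2) + ρ / 4 := by
            have hd0 : (0 : ℝ) ≤ dist r q := dist_nonneg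
            rw [dist_zero_right] at ht
            nlinarith [norm_nonneg t]
        _ ≤ ρ := by linarith
    exact Filter.eventually_of_mem (Metric.ball_mem_nhds p (by positivity)) hr
  have hUS : U ⊆ S :=
    hUconn.isPreconnected.subset_of_closure_inter_subset hSopen ⟨p₀, hp₀U, hp₀S⟩ hclos
  intro p hp
  exact (hUS hp).self_of_nhds
end

section
/- Let n ≥ 1, let A be an invertible Hermitian n×n complex matrix (Aᴴ = A), and let B be any n×n complex matrix. Define Q : ℂⁿ → ℝ by Q(z) = (z̄ᵀ A z) + (zᵀ B z) + conj(zᵀ B z), noting that z̄ᵀ A z is real since A is Hermitian. Then the critical set Σ = {z ∈ ℂⁿ : the real Fréchet derivative of Q at z is zero} is the underlying set of a real-linear subspace of ℂⁿ of real dimension at most n. (This is the statement, quoted and used in the proof of the paper's Proposition 2.1(b), that for an A-nondegenerate quadratic part the set ∇Q = 0 is a real subspace of dimension at most n.) -/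
open Matrix


noncomputable section CritAux

namespace CritAux

variable (n : ℕ)

/-- pointwise conjugation as a real CLM on ℂⁿ -/
def sconj : (Fin n → ℂ) →L[ℝ] (Fin n → ℂ) :=
  ContinuousLinearMap.pi fun i =>
    (Complex.conjCLE.toContinuousLinearMap).comp (ContinuousLinearMap.proj i)

@[simp] lemma sconj_apply (z : Fin n → ℂ) : sconj n z = star z := by
  ext i; simp [sconj]

/-- matrix multiplication as a real CLM -/
def mulC (M : Matrix (Fin n) (Fin n) ℂ) : (Fin n → ℂ) →L[ℝ] (Fin n → ℂ) :=
  LinearMap.toContinuousLinearMap ((M.mulVecLin).restrictScalars ℝ)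

@[simp] lemma mulC_apply (M : Matrix (Fin n) (Fin n) ℂ) (z : Fin n → ℂ) :
    mulC n M z = M *ᵥ z := by
  simp [mulC]

/-- dot product as a real bilinear CLM -/
def dotCLM : (Fin n → ℂ) →L[ℝ] (Fin n → ℂ) →L[ℝ] ℂ :=
  LinearMap.toContinuousLinearMap <|
    (LinearMap.toContinuousLinearMap : ((Fin n → ℂ) →ₗ[ℝ] ℂ) ≃ₗ[ℝ] _).toLinearMap ∘ₗ
      (LinearMap.mk₂ ℝ dotProduct add_dotProduct smul_dotProduct dotProduct_add
        dotProduct_smul)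

@[simp] lemma dotCLM_apply (x y : Fin n → ℂ) : dotCLM n x y = x ⬝ᵥ y := by
  simp [dotCLM]

variable {n}

/-- the real-linear map whose kernel is the critical set -/
def Fmap (A B : Matrix (Fin n) (Fin n) ℂ) : (Fin n → ℂ) →ₗ[ℝ] (Fin n → ℂ) :=
  ((A.mulVecLin).restrictScalars ℝ) +
    (sconj n).toLinearMap ∘ₗ (((B + Bᵀ).mulVecLin).restrictScalars ℝ)

@[simp] lemma Fmap_apply (A B : Matrix (Fin n) (Fin n) ℂ) (z : Fin n → ℂ) :
    Fmap A B z = A *ᵥ z + star ((B + Bᵀ) *ᵥ z) := by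
  simp [Fmap, add_mulVec, mulVec_transpose, star_add]

end CritAux

end CritAux

open CritAux

lemma hasFDerivAt_G (n : ℕ) (A B : Matrix (Fin n) (Fin n) ℂ) (z : Fin n → ℂ) :
    HasFDerivAt
      (fun y : Fin n → ℂ =>
        ((dotCLM n).comp (sconj n)) y ((mulC n A) y) + (dotCLM n) y ((mulC n B) y) +
          Complex.conjCLE.toContinuousLinearMap ((dotCLM n) y ((mulC n B) y)))
      (((((dotCLM n).comp (sconj n)) z).comp (mulC n A) +
            ((dotCLM n).comp (sconj n)).flip ((mulC n A) z) +
          (((dotCLM n) z).comp (mulC n B) + (dotCLM n).flip ((mulC n B) z))) +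
        Complex.conjCLE.toContinuousLinearMap.comp
          (((dotCLM n) z).comp (mulC n B) + (dotCLM n).flip ((mulC n B) z))) z := by
  have h1 := (((dotCLM n).comp (sconj n)).hasFDerivAt (x := z)).clm_apply
    ((mulC n A).hasFDerivAt (x := z))
  have h2 := ((dotCLM n).hasFDerivAt (x := z)).clm_apply ((mulC n B).hasFDerivAt (x := z))
  have h3 := (Complex.conjCLE.toContinuousLinearMap.hasFDerivAt
    (x := (dotCLM n) z ((mulC n B) z))).comp z h2
  exact (h1.add h2).add h3

/-- Lemma 2.1 of [crext2], used in the paper's Proposition 2.1(b): for an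
invertible Hermitian matrix `A` and arbitrary matrix `B`, the critical set of
`Q(z) = z̄ᵀAz + zᵀBz + conj(zᵀBz)` is a real-linear subspace of ℂⁿ of real
dimension at most `n`. -/
theorem critical_set_of_A_nondegenerate_quadric (n : ℕ) (hn : 1 ≤ n)
    (A B : Matrix (Fin n) (Fin n) ℂ)
    (hA : A.IsHermitian) (hAinv : IsUnit A)
    (Q : (Fin n → ℂ) → ℝ)
    (hQ : ∀ z : Fin n → ℂ,
      (Q z : ℂ) = star z ⬝ᵥ (A *ᵥ z) + z ⬝ᵥ (B *ᵥ z) + star (z ⬝ᵥ (B *ᵥ z))) :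
    ∃ V : Submodule ℝ ((Fin n) → ℂ),
      (V : Set ((Fin n) → ℂ)) = {z | fderiv ℝ Q z = 0} ∧
      Module.finrank ℝ V ≤ n := by
  classical
  have hQG : Q = fun y : Fin n → ℂ =>
      (((dotCLM n).comp (sconj n)) y ((mulC n A) y) + (dotCLM n) y ((mulC n B) y) +
        Complex.conjCLE.toContinuousLinearMap ((dotCLM n) y ((mulC n B) y))).re := by
    funext y
    calc Q y = ((Q y : ℂ)).re := (Complex.ofReal_re _).symm
    _ = _ := by rw [hQ y]; simp [Complex.conjCLE_apply]
  subst hQG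
  have hQd : ∀ z : Fin n → ℂ, HasFDerivAt
      (fun y : Fin n → ℂ =>
        (((dotCLM n).comp (sconj n)) y ((mulC n A) y) + (dotCLM n) y ((mulC n B) y) +
          Complex.conjCLE.toContinuousLinearMap ((dotCLM n) y ((mulC n B) y))).re)
      (Complex.reCLM.comp
        (((((dotCLM n).comp (sconj n)) z).comp (mulC n A) +
              ((dotCLM n).comp (sconj n)).flip ((mulC n A) z) +
            (((dotCLM n) z).comp (mulC n B) + (dotCLM n).flip ((mulC n B) z))) +
          Complex.conjCLE.toContinuousLinearMap.comp
            (((dotCLM n) z).comp (mulC n B) + (dotCLM n).flip ((mulC n B) z)))) z :=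
    fun z => (Complex.reCLM.hasFDerivAt).comp z (hasFDerivAt_G n A B z)
  have heval : ∀ z w : Fin n → ℂ,
      (Complex.reCLM.comp
        (((((dotCLM n).comp (sconj n)) z).comp (mulC n A) +
              ((dotCLM n).comp (sconj n)).flip ((mulC n A) z) +
            (((dotCLM n) z).comp (mulC n B) + (dotCLM n).flip ((mulC n B) z))) +
          Complex.conjCLE.toContinuousLinearMap.comp
            (((dotCLM n) z).comp (mulC n B) + (dotCLM n).flip ((mulC n B) z)))) w
      = 2 * (star w ⬝ᵥ (Fmap A B z)).re := by
    intro z w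
    have hswap : star z ⬝ᵥ (A *ᵥ w) = star (star w ⬝ᵥ (A *ᵥ z)) := by
      rw [star_dotProduct]
      congr 1
      rw [star_mulVec, hA.eq, dotProduct_mulVec]
    have htrans : z ⬝ᵥ (B *ᵥ w) = w ⬝ᵥ (Bᵀ *ᵥ z) := by
      rw [dotProduct_mulVec, mulVec_transpose, dotProduct_comm]
    have hsplit : star w ⬝ᵥ (Fmap A B z) =
        star w ⬝ᵥ (A *ᵥ z) + star (w ⬝ᵥ (B *ᵥ z) + w ⬝ᵥ (Bᵀ *ᵥ z)) := by
      rw [Fmap_apply, dotProduct_add, star_dotProduct_star]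
      congr 2
      rw [add_mulVec, add_dotProduct, dotProduct_comm w (B *ᵥ z), dotProduct_comm w (Bᵀ *ᵥ z)]
    simp only [ContinuousLinearMap.add_apply, ContinuousLinearMap.comp_apply,
      ContinuousLinearMap.flip_apply, dotCLM_apply, sconj_apply, mulC_apply,
      ContinuousLinearEquiv.coe_coe, Complex.conjCLE_apply, Complex.reCLM_apply]
    rw [hswap, htrans, hsplit]
    simp only [Complex.add_re, Complex.conj_re, Complex.star_def, map_add]
    ring
  have key : ∀ z : Fin n → ℂ,
      fderiv ℝ (fun y : Fin n → ℂ =>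
        (((dotCLM n).comp (sconj n)) y ((mulC n A) y) + (dotCLM n) y ((mulC n B) y) +
          Complex.conjCLE.toContinuousLinearMap ((dotCLM n) y ((mulC n B) y))).re) z = 0
        ↔ Fmap A B z = 0 := by
    intro z
    rw [(hQd z).fderiv]
    constructor
    · intro h0
      have hv := heval z (Fmap A B z)
      rw [h0] at hv
      simp only [ContinuousLinearMap.zero_apply] at hv
      have hsum : ∑ i, Complex.normSq (Fmap A B z i) = 0 := by
        have hre : (star (Fmap A B z) ⬝ᵥ (Fmap A B z)).re
            = ∑ i, Complex.normSq (Fmap A B z i) := by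
          rw [dotProduct, Complex.re_sum]
          refine Finset.sum_congr rfl fun i _ => ?_
          simp only [Pi.star_apply, Complex.star_def, Complex.mul_re, Complex.conj_re,
            Complex.conj_im, Complex.normSq_apply]
          ring
        rw [hre] at hv
        linarith
      funext i
      have := (Finset.sum_eq_zero_iff_of_nonneg
        (fun i _ => Complex.normSq_nonneg (Fmap A B z i))).mp hsum i (Finset.mem_univ i)
      simpa [Complex.normSq_eq_zero] using this
    · intro h0
      ext w
      rw [heval z w, h0]
      simp
  refine ⟨LinearMap.ker (Fmap A B), ?_, ?_⟩
  · ext z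
    simp only [SetLike.mem_coe, LinearMap.mem_ker, Set.mem_setOf_eq, key z]
  · set V := LinearMap.ker (Fmap A B) with hV
    set J : (Fin n → ℂ) →ₗ[ℝ] (Fin n → ℂ) :=
      { toFun := fun z => Complex.I • z
        map_add' := fun x y => smul_add _ _ _
        map_smul' := fun r x => (smul_comm r Complex.I x).symm } with hJ
    have hJinj : Function.Injective J := by
      intro x y hxy
      have h := congrArg (fun v => (-Complex.I) • v) hxy
      simpa [hJ, smul_smul, Complex.I_mul_I] using h
    have hdisj : V ⊓ V.map J = ⊥ := by
      rw [eq_bot_iff]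
      rintro z ⟨hz, y, hy, rfl⟩
      have h1 : A *ᵥ y + star ((B + Bᵀ) *ᵥ y) = 0 := by
        simpa [hV, LinearMap.mem_ker, Fmap_apply] using hy
      have h2 : Complex.I • (A *ᵥ y) - Complex.I • star ((B + Bᵀ) *ᵥ y) = 0 := by
        have h2a : Fmap A B (Complex.I • y) = 0 := by
          simpa [hV, LinearMap.mem_ker, hJ] using hz
        rw [Fmap_apply, Matrix.mulVec_smul, Matrix.mulVec_smul, star_smul,
          Complex.star_def, Complex.conj_I, neg_smul, ← sub_eq_add_neg] at h2a
        exact h2a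
      have h3 : A *ᵥ y - star ((B + Bᵀ) *ᵥ y) = 0 := by
        have h2' := congrArg (fun v => (-Complex.I) • v) h2
        simpa [smul_sub, smul_smul, Complex.I_mul_I] using h2'
      have h4 : A *ᵥ y = 0 := by
        have h5 : (A *ᵥ y + star ((B + Bᵀ) *ᵥ y)) + (A *ᵥ y - star ((B + Bᵀ) *ᵥ y))
            = A *ᵥ y + A *ᵥ y := by abel
        rw [h1, h3, add_zero] at h5
        funext i
        have hi := congrFun h5.symm i
        simp only [Pi.add_apply] at hi
        have := add_self_eq_zero.mp hi
        simpa using this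
      have hy0 : y = 0 := by
        have hinj := Matrix.mulVec_injective_iff_isUnit.mpr hAinv
        exact hinj (by simp [h4] : A *ᵥ y = A *ᵥ 0)
      simp [hJ, hy0]
    have hrank := Submodule.finrank_sup_add_finrank_inf_eq V (V.map J)
    rw [hdisj] at hrank
    have hmapeq : Module.finrank ℝ (V.map J) = Module.finrank ℝ V :=
      (LinearEquiv.finrank_eq (Submodule.equivMapOfInjective J hJinj V)).symm
    have hle : Module.finrank ℝ ↥(V ⊔ V.map J) ≤ Module.finrank ℝ (Fin n → ℂ) :=
      Submodule.finrank_le _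
    have hEdim : Module.finrank ℝ (Fin n → ℂ) = 2 * n := by
      simp [Module.finrank_pi_fintype, Complex.finrank_real_complex, Finset.sum_const,
        mul_comm]
    simp only [finrank_bot, add_zero] at hrank
    rw [hmapeq] at hrank
    omega
end

section
/- Let n ≥ 1 and let Ω ⊆ ℂⁿ × ℝ be a bounded domain. Let W ⊆ ℂⁿ × ℝ be open with closure(Ω) ⊆ W and let F = (F₁, F₂) : W → ℂⁿ × ℂ be real-analytic. Assume F is CR on Ω, i.e., for every s ∈ ℝ each component of F is holomorphic in z on the slice Ω_(s) = {z : (z,s) ∈ Ω}. If the last component F₂ is real-valued at every point of the frontier of Ω, then F₂ is real-valued at every point of Ω, and F₂ depends only on s on Ω: F₂(z,s) = F₂(z',s) whenever (z,s) ∈ Ω and (z',s) ∈ Ω. (Paper's Lemma 6.1: a real-analytic CR map on the closure of a bounded domain in ℂⁿ × ℝ that sends the boundary into ℂⁿ × ℝ maps the whole domain into ℂⁿ × ℝ, with last component a function of s alone.) -/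
open Complex Set Metric Bornology

/-- A holomorphic function with real values near a point has zero derivative there. -/
lemma deriv_zero_of_im_eqzero {g : ℂ → ℂ} {t d : ℂ} (hg : HasDerivAt g d t)
    (h : ∀ᶠ x in nhds t, (g x).im = 0) : d = 0 := by
  have hin1 : HasDerivAt (fun x : ℝ => t + (x : ℂ)) 1 (0 : ℝ) := by
    simpa using (Complex.ofRealCLM.hasDerivAt (x := (0:ℝ))).const_add t
  have h1 : HasDerivAt (fun x : ℝ => g (t + (x : ℝ))) ((1:ℂ) • d) 0 :=
    HasDerivAt.scomp_of_eq (0 : ℝ) hg hin1 (by simp)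
  have h1im : HasDerivAt (fun x : ℝ => (g (t + (x:ℝ))).im) ((1:ℂ) • d).im 0 :=
    Complex.imCLM.hasFDerivAt.comp_hasDerivAt 0 h1
  have hev1 : (fun x : ℝ => (g (t + (x:ℝ))).im) =ᶠ[nhds (0:ℝ)] (fun _ => 0) := by
    have htend : Filter.Tendsto (fun x : ℝ => t + (x:ℝ)) (nhds 0) (nhds t) := by
      have : Continuous (fun x : ℝ => t + (x:ℝ)) := continuous_const.add Complex.continuous_ofReal
      simpa using this.tendsto 0
    exact htend.eventually h
  have him : d.im = 0 := by
    have := (h1im.congr_of_eventuallyEq hev1.symm).unique (hasDerivAt_const 0 0)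
    simpa using this
  have hin2 : HasDerivAt (fun x : ℝ => t + (x : ℂ) * Complex.I) Complex.I (0 : ℝ) := by
    simpa using ((Complex.ofRealCLM.hasDerivAt (x := (0:ℝ))).mul_const Complex.I).const_add t
  have h2 : HasDerivAt (fun x : ℝ => g (t + (x : ℝ) * Complex.I)) (Complex.I • d) 0 :=
    HasDerivAt.scomp_of_eq (0 : ℝ) hg hin2 (by simp)
  have h2im : HasDerivAt (fun x : ℝ => (g (t + (x:ℝ) * Complex.I)).im) ((Complex.I • d)).im 0 :=
    Complex.imCLM.hasFDerivAt.comp_hasDerivAt 0 h2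
  have hev2 : (fun x : ℝ => (g (t + (x:ℝ) * Complex.I)).im) =ᶠ[nhds (0:ℝ)] (fun _ => 0) := by
    have htend : Filter.Tendsto (fun x : ℝ => t + (x:ℝ) * Complex.I) (nhds 0) (nhds t) := by
      have : Continuous (fun x : ℝ => t + (x:ℝ) * Complex.I) :=
        continuous_const.add (Complex.continuous_ofReal.mul continuous_const)
      simpa using this.tendsto 0
    exact htend.eventually h
  have hre : d.re = 0 := by
    have := (h2im.congr_of_eventuallyEq hev2.symm).unique (hasDerivAt_const 0 0)
    simpa using this
  exact Complex.ext hre him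

/-- A holomorphic function with real values on an open set is constant on balls inside. -/
lemma const_on_ball {n : ℕ} {g : (Fin n → ℂ) → ℂ} {U : Set (Fin n → ℂ)}
    (hU : IsOpen U) (hg : DifferentiableOn ℂ g U) (him : ∀ z ∈ U, (g z).im = 0)
    {c z : Fin n → ℂ} {r : ℝ} (hball : ball c r ⊆ U) (hz : z ∈ ball c r) : g z = g c := by
  rcases eq_or_ne z c with rfl | hne
  · rfl
  have hzc : (0:ℝ) < ‖z - c‖ := by
    rw [norm_pos_iff]; exact sub_ne_zero.2 hne
  set ℓ : ℂ → (Fin n → ℂ) := fun t => c + t • (z - c) with hℓ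
  set T : Set ℂ := ball (0:ℂ) (r / ‖z - c‖) with hT
  have hℓmem : ∀ t ∈ T, ℓ t ∈ ball c r := by
    intro t ht
    have : dist (ℓ t) c = ‖t‖ * ‖z - c‖ := by
      simp [hℓ, dist_eq_norm, norm_smul]
    rw [mem_ball, this]
    rw [hT, mem_ball, dist_zero_right] at ht
    calc ‖t‖ * ‖z - c‖ < (r / ‖z - c‖) * ‖z - c‖ := by
          exact mul_lt_mul_of_pos_right ht hzc
      _ = r := div_mul_cancel₀ r hzc.ne'
  have h0T : (0:ℂ) ∈ T := by
    rw [hT, mem_ball, dist_self]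
    exact div_pos (pos_of_mem_ball hz) hzc
  have h1T : (1:ℂ) ∈ T := by
    rw [hT, mem_ball, dist_zero_right, norm_one, lt_div_iff₀ hzc, one_mul]
    simpa [mem_ball, dist_eq_norm] using hz
  have hd : ∀ t ∈ T, HasFDerivWithinAt (g ∘ ℓ) (0 : ℂ →L[ℂ] ℂ) T t := by
    intro t ht
    have hℓd : HasDerivAt ℓ (z - c) t := by
      simpa [hℓ] using ((hasDerivAt_id t).smul_const (z - c)).const_add c
    have hgd : DifferentiableAt ℂ g (ℓ t) :=
      hg.differentiableAt (hU.mem_nhds (hball (hℓmem t ht)))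
    have hcomp : HasDerivAt (g ∘ ℓ) (fderiv ℂ g (ℓ t) (z - c)) t :=
      hgd.hasFDerivAt.comp_hasDerivAt t hℓd
    have hev : ∀ᶠ x in nhds t, ((g ∘ ℓ) x).im = 0 := by
      filter_upwards [isOpen_ball.mem_nhds ht] with x hx
      exact him _ (hball (hℓmem x hx))
    have hzero := deriv_zero_of_im_eqzero hcomp hev
    rw [hzero] at hcomp
    have h0 : ContinuousLinearMap.smulRight (1 : ℂ →L[ℂ] ℂ) (0:ℂ) = 0 := by
      ext; simp
    exact h0 ▸ hcomp.hasFDerivAt.hasFDerivWithinAt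
  have := (convex_ball (0:ℂ) (r / ‖z - c‖)).norm_image_sub_le_of_norm_hasFDerivWithin_le
    (f' := fun _ => (0 : ℂ →L[ℂ] ℂ)) (C := 0) (by simpa [hT] using hd)
    (fun x _ => by simp) h0T (by rw [← hT]; exact h1T)
  have heq : (g ∘ ℓ) 1 = (g ∘ ℓ) 0 := by
    have h0 : (0:ℝ) * ‖(1:ℂ) - 0‖ = 0 := by simp
    rw [h0] at this
    exact sub_eq_zero.1 (norm_le_zero_iff.1 this)
  simpa [hℓ, Function.comp] using heq

lemma im_eq_zero_on
    {n : ℕ} (hn : 1 ≤ n) {Ω : Set ((Fin n → ℂ) × ℝ)} (hΩopen : IsOpen Ω)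
    (hΩbdd : Bornology.IsBounded Ω)
    {W : Set ((Fin n → ℂ) × ℝ)} (hWopen : IsOpen W) (hWsub : closure Ω ⊆ W)
    {F : (Fin n → ℂ) × ℝ → (Fin n → ℂ) × ℂ} (hFan : AnalyticOn ℝ F W)
    (hFCR₂ : ∀ s : ℝ, DifferentiableOn ℂ (fun z : Fin n → ℂ => (F (z, s)).2)
      {z : Fin n → ℂ | (z, s) ∈ Ω})
    (hbd : ∀ p ∈ closure Ω \ Ω, ((F p).2).im = 0) :
    ∀ p ∈ Ω, ((F p).2).im = 0 := by
  haveI : Nonempty (Fin n) := ⟨⟨0, hn⟩⟩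
  rintro ⟨z, s⟩ hp
  set U : Set (Fin n → ℂ) := {z | (z, s) ∈ Ω} with hU
  have hUopen : IsOpen U := hΩopen.preimage (Continuous.prodMk_left s)
  have hUbdd : IsBounded U := by
    rcases (isBounded_iff_forall_norm_le).1 hΩbdd with ⟨C, hC⟩
    exact (isBounded_iff_forall_norm_le).2 ⟨C, fun x hx =>
      le_trans (norm_fst_le ((x, s) : (Fin n → ℂ) × ℝ)) (hC _ hx)⟩
  have hcl : ∀ x ∈ closure U, ((x, s) : (Fin n → ℂ) × ℝ) ∈ closure Ω := by
    intro x hx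
    have hcont : Continuous (fun y : Fin n → ℂ => ((y, s) : (Fin n → ℂ) × ℝ)) :=
      Continuous.prodMk_left s
    have h := image_closure_subset_closure_image (f := fun y : Fin n → ℂ =>
      ((y, s) : (Fin n → ℂ) × ℝ)) hcont (s := U)
    have hxim : ((x, s) : (Fin n → ℂ) × ℝ) ∈ closure ((fun y : Fin n → ℂ => (y, s)) '' U) :=
      h ⟨x, hx, rfl⟩
    refine closure_mono ?_ hxim
    rintro _ ⟨y, hy, rfl⟩; exact hy
  have hfr : ∀ x ∈ frontier U, ((F (x, s)).2).im = 0 := by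
    intro x hx
    rw [hUopen.frontier_eq] at hx
    exact hbd _ ⟨hcl x hx.1, hx.2⟩
  have hFc : ContinuousOn (fun x : Fin n → ℂ => (F (x, s)).2) (closure U) := by
    have h1 : ContinuousOn F W := hFan.continuousOn
    have h2 : ContinuousOn (fun x : Fin n → ℂ => F (x, s)) (closure U) := by
      apply h1.comp (Continuous.prodMk_left s).continuousOn
      intro x hx
      exact hWsub (hcl x hx)
    exact h2.snd
  have key : ∀ c : ℂ, (∀ x ∈ frontier U, (c * (F (x, s)).2).re = 0) →
      ∀ x ∈ U, (c * (F (x, s)).2).re ≤ 0 := by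
    intro c hfr0 x hx
    set g : (Fin n → ℂ) → ℂ := fun x => Complex.exp (c * (F (x, s)).2) with hg
    have hdc : DiffContOnCl ℂ g U := by
      constructor
      · exact ((hFCR₂ s).const_mul c).cexp
      · exact (hFc.const_smul c).cexp
    have hC : ∀ x ∈ frontier U, ‖g x‖ ≤ 1 := by
      intro x hx
      rw [hg]
      simp only [Complex.norm_exp, hfr0 x hx, Real.exp_zero, le_refl]
    have := Complex.norm_le_of_forall_mem_frontier_norm_le hUbdd hdc hC
      (subset_closure hx)
    rw [hg] at this
    simp only [Complex.norm_exp] at this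
    exact Real.exp_le_one_iff.1 this
  have h1 := key Complex.I (fun x hx => by simp [Complex.mul_re, hfr x hx]) z hp
  have h2 := key (-Complex.I) (fun x hx => by simp [Complex.mul_re, hfr x hx]) z hp
  simp only [Complex.mul_re, Complex.I_re, Complex.I_im, Complex.neg_re, Complex.neg_im] at h1 h2
  simp at h1 h2
  linarith



/-- Paper's Lemma 6.1: a real-analytic CR map on the closure of a bounded
domain `Ω ⊆ ℂⁿ × ℝ` whose last component is real-valued on the boundary has
last component real-valued on all of `Ω` and depending only on `s`. -/
theorem maps_to_flat (n : ℕ) (hn : 1 ≤ n)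
    (Ω : Set ((Fin n → ℂ) × ℝ)) (hΩopen : IsOpen Ω) (hΩconn : IsConnected Ω)
    (hΩbdd : Bornology.IsBounded Ω)
    (W : Set ((Fin n → ℂ) × ℝ)) (hWopen : IsOpen W) (hWsub : closure Ω ⊆ W)
    (F : (Fin n → ℂ) × ℝ → (Fin n → ℂ) × ℂ) (hFan : AnalyticOn ℝ F W)
    (hFCR₁ : ∀ s : ℝ, DifferentiableOn ℂ (fun z : Fin n → ℂ => (F (z, s)).1)
      {z : Fin n → ℂ | (z, s) ∈ Ω})
    (hFCR₂ : ∀ s : ℝ, DifferentiableOn ℂ (fun z : Fin n → ℂ => (F (z, s)).2)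
      {z : Fin n → ℂ | (z, s) ∈ Ω})
    (hbd : ∀ p ∈ closure Ω \ Ω, ((F p).2).im = 0) :
    (∀ p ∈ Ω, ((F p).2).im = 0) ∧
      (∀ (z z' : Fin n → ℂ) (s : ℝ), (z, s) ∈ Ω → (z', s) ∈ Ω →
        (F (z, s)).2 = (F (z', s)).2) := by
  classical
  have him := im_eq_zero_on hn hΩopen hΩbdd hWopen hWsub hFan hFCR₂ hbd
  refine ⟨him, ?_⟩
  intro z z' s hzs hz's
  set f : (Fin n → ℂ) × ℝ → ℝ := fun q => ((F q).2).re with hf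
  -- a helper: f is real-analytic in `s` along vertical lines inside `W`
  have hfan : ∀ (z₀ : Fin n → ℂ) (s₀ : ℝ), (z₀, s₀) ∈ W →
      AnalyticAt ℝ (fun u : ℝ => f (z₀, u)) s₀ := by
    intro z₀ s₀ hmem
    have h1 : AnalyticAt ℝ (fun u : ℝ => ((z₀, u) : (Fin n → ℂ) × ℝ)) s₀ :=
      analyticAt_const.prod analyticAt_id
    have h2 : AnalyticAt ℝ F (z₀, s₀) := (hWopen.analyticOn_iff_analyticOnNhd.1 hFan) _ hmem
    have h3 : AnalyticAt ℝ (fun u : ℝ => F (z₀, u)) s₀ := h2.comp h1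
    have h4 : AnalyticAt ℝ (fun u : ℝ => (F (z₀, u)).2) s₀ := analyticAt_snd.comp h3
    exact (Complex.reCLM.analyticAt _).comp h4
  -- z-constancy of f on balls contained in slices
  have hzconst : ∀ (cz : Fin n → ℂ) (ε : ℝ) (u : ℝ), ball cz ε ⊆ {y : Fin n → ℂ | (y, u) ∈ Ω} →
      ∀ y ∈ ball cz ε, ∀ y' ∈ ball cz ε, f (y, u) = f (y', u) := by
    intro cz ε u hsub y hy y' hy'
    have hUopen : IsOpen {y : Fin n → ℂ | (y, u) ∈ Ω} :=
      hΩopen.preimage (Continuous.prodMk_left u)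
    have h1 := const_on_ball hUopen (hFCR₂ u) (fun x hx => him (x, u) hx) hsub hy
    have h2 := const_on_ball hUopen (hFCR₂ u) (fun x hx => him (x, u) hx) hsub hy'
    simp only [hf]
    rw [h1, h2]
  -- path from (z,s) to (z',s)
  have hpc : IsPathConnected Ω := (hΩopen.isConnected_iff_isPathConnected).1 hΩconn
  obtain ⟨γ, hγ⟩ := hpc.joinedIn _ hzs _ hz's
  set g : ℝ → (Fin n → ℂ) × ℝ := ⇑γ.extend with hgdef
  have hgmem : ∀ t ∈ Icc (0:ℝ) 1, g t ∈ Ω := by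
    intro t ht
    rw [hgdef, γ.extend_apply ht]
    exact hγ _
  have hgc : Continuous g := γ.continuous_extend
  have hg0 : g 0 = (z, s) := γ.extend_zero
  have hg1 : g 1 = (z', s) := γ.extend_one
  set σ : ℝ → ℝ := fun t => (g t).2 with hσdef
  set A : Set ℝ := {t | t ∈ Icc (0:ℝ) 1 ∧ ∃ J ψ, IsOpen J ∧ IsPreconnected J ∧
    (∀ u ∈ Icc (0:ℝ) t, σ u ∈ J) ∧ AnalyticOnNhd ℝ ψ J ∧ ψ (σ 0) = f (g 0) ∧
    ∀ᶠ u in nhds (σ t), ψ u = f ((g t).1, u)} with hA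
  have hbox : ∀ t₀ ∈ Icc (0:ℝ) 1, ∃ ε > 0,
      ball (g t₀).1 ε ×ˢ Ioo ((g t₀).2 - ε) ((g t₀).2 + ε) ⊆ Ω := by
    intro t₀ ht₀
    rcases Metric.isOpen_iff.1 hΩopen _ (hgmem t₀ ht₀) with ⟨ε, hε, hsub⟩
    refine ⟨ε, hε, ?_⟩
    rw [← Real.ball_eq_Ioo, ball_prod_same]
    simpa using hsub
  -- the gluing step
  have claim : ∀ (a b : ℝ) (cz : Fin n → ℂ) (cs ε : ℝ), a ∈ Icc (0:ℝ) 1 → b ∈ Icc (0:ℝ) 1 →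
      ball cz ε ×ˢ Ioo (cs - ε) (cs + ε) ⊆ Ω →
      (∀ u ∈ uIcc a b, g u ∈ ball cz ε ×ˢ Ioo (cs - ε) (cs + ε)) →
      a ∈ A → b ∈ A := by
    intro a b cz cs ε ha hb hP hcover haA
    obtain ⟨haIcc, J, ψ, hJo, hJc, hJcov, hψan, hψ0, hψev⟩ := haA
    have hgaP := hcover a left_mem_uIcc
    have hgbP := hcover b right_mem_uIcc
    have hσaI : σ a ∈ Ioo (cs - ε) (cs + ε) := hgaP.2
    have hσbI : σ b ∈ Ioo (cs - ε) (cs + ε) := hgbP.2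
    have hσaJ : σ a ∈ J := hJcov a ⟨ha.1, le_refl a⟩
    have hzc : ∀ u ∈ Ioo (cs - ε) (cs + ε), f ((g a).1, u) = f ((g b).1, u) := by
      intro u hu
      refine hzconst cz ε u ?_ _ hgaP.1 _ hgbP.1
      intro y hy
      exact hP ⟨hy, hu⟩
    set φ : ℝ → ℝ := fun u => f ((g b).1, u) with hφ
    have hφan : AnalyticOnNhd ℝ φ (Ioo (cs - ε) (cs + ε)) := by
      intro u hu
      exact hfan _ _ (hWsub (subset_closure (hP ⟨hgbP.1, hu⟩)))
    have hψφ : ψ =ᶠ[nhds (σ a)] φ := by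
      filter_upwards [hψev, isOpen_Ioo.mem_nhds hσaI] with u h1 h2
      rw [h1, hφ]
      exact hzc u h2
    have hinter : IsPreconnected (J ∩ Ioo (cs - ε) (cs + ε)) :=
      (Set.OrdConnected.inter hJc.ordConnected Set.ordConnected_Ioo).isPreconnected
    have hEq : EqOn ψ φ (J ∩ Ioo (cs - ε) (cs + ε)) :=
      AnalyticOnNhd.eqOn_of_preconnected_of_eventuallyEq (hψan.mono inter_subset_left)
        (hφan.mono inter_subset_right) hinter ⟨hσaJ, hσaI⟩ hψφ
    set ψ' : ℝ → ℝ := fun u => if u ∈ J then ψ u else φ u with hψ'def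
    have hψ'J : EqOn ψ' ψ J := fun u hu => if_pos hu
    have hψ'I : EqOn ψ' φ (Ioo (cs - ε) (cs + ε)) := by
      intro u hu
      by_cases h : u ∈ J
      · rw [hψ'def]; simp only [if_pos h]; exact hEq ⟨h, hu⟩
      · exact if_neg h
    refine ⟨hb, J ∪ Ioo (cs - ε) (cs + ε), ψ', hJo.union isOpen_Ioo,
      IsPreconnected.union (σ a) hσaJ hσaI hJc isPreconnected_Ioo, ?_, ?_, ?_, ?_⟩
    · intro u hu
      rcases le_total u a with h | h
      · exact Or.inl (hJcov u ⟨hu.1, h⟩)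
      · have huI : u ∈ uIcc a b := mem_uIcc.2 (Or.inl ⟨h, hu.2⟩)
        exact Or.inr (hcover u huI).2
    · intro u hu
      rcases hu with h | h
      · exact (hψan u h).congr
          (Filter.eventuallyEq_of_mem (hJo.mem_nhds h) (fun x hx => (hψ'J hx).symm))
      · exact (hφan u h).congr
          (Filter.eventuallyEq_of_mem (isOpen_Ioo.mem_nhds h) (fun x hx => (hψ'I hx).symm))
    · rw [hψ'J (hJcov 0 ⟨le_refl 0, ha.1⟩)]
      exact hψ0
    · filter_upwards [isOpen_Ioo.mem_nhds hσbI] with u hu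
      rw [hψ'I hu]
  have key : ∀ t₀ ∈ Icc (0:ℝ) 1, ∃ δ > 0, ∀ t₁ ∈ Icc (0:ℝ) 1, |t₁ - t₀| < δ →
      ((t₀ ∈ A → t₁ ∈ A) ∧ (t₁ ∈ A → t₀ ∈ A)) := by
    intro t₀ ht₀
    obtain ⟨ε, hε, hsub⟩ := hbox t₀ ht₀
    rcases Metric.continuousAt_iff.1 hgc.continuousAt ε hε with ⟨δ, hδ, hd⟩
    refine ⟨δ, hδ, fun t₁ ht₁ hlt => ?_⟩
    have hcover : ∀ u ∈ uIcc t₀ t₁,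
        g u ∈ ball (g t₀).1 ε ×ˢ Ioo ((g t₀).2 - ε) ((g t₀).2 + ε) := by
      intro u hu
      rw [Set.mem_uIcc] at hu
      have habs : |u - t₀| < δ := by
        rw [abs_sub_lt_iff] at hlt ⊢
        rcases hu with ⟨h1, h2⟩ | ⟨h1, h2⟩ <;> constructor <;> linarith [hlt.1, hlt.2]
      have := hd (show dist u t₀ < δ by rwa [Real.dist_eq])
      rw [← Real.ball_eq_Ioo, ball_prod_same]
      simpa [mem_ball] using this
    have h1 := claim t₀ t₁ _ _ _ ht₀ ht₁ hsub hcover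
    have h2 := claim t₁ t₀ _ _ _ ht₁ ht₀ hsub (by rwa [uIcc_comm])
    exact ⟨h1, h2⟩
  -- 0 ∈ A
  have h0A : (0:ℝ) ∈ A := by
    obtain ⟨ε, hε, hsub⟩ := hbox 0 ⟨le_refl 0, zero_le_one⟩
    refine ⟨⟨le_refl 0, zero_le_one⟩, Ioo ((g 0).2 - ε) ((g 0).2 + ε), fun u => f ((g 0).1, u),
      isOpen_Ioo, isPreconnected_Ioo, ?_, ?_, rfl, Filter.Eventually.of_forall (fun u => rfl)⟩
    · intro u hu
      have hu0 : u = 0 := le_antisymm hu.2 hu.1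
      subst hu0
      exact ⟨by linarith, by linarith⟩
    · intro u hu
      exact hfan _ _ (hWsub (subset_closure (hsub ⟨mem_ball_self hε, hu⟩)))
  have hAsub : A ⊆ Icc 0 1 := fun t ht => ht.1
  have hbddA : BddAbove A := ⟨1, fun t ht => (hAsub ht).2⟩
  have hneA : A.Nonempty := ⟨0, h0A⟩
  set T := sSup A with hTdef
  have hTmem : T ∈ Icc (0:ℝ) 1 :=
    ⟨le_trans (hAsub h0A).1 (le_csSup hbddA h0A), csSup_le hneA (fun t ht => (hAsub ht).2)⟩
  obtain ⟨δ, hδ, hkey⟩ := key T hTmem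
  have hTA : T ∈ A := by
    obtain ⟨t, htA, hlt⟩ : ∃ t ∈ A, T - δ < t := exists_lt_of_lt_csSup hneA (by linarith)
    have htle : t ≤ T := le_csSup hbddA htA
    exact (hkey t (hAsub htA) (by rw [abs_sub_lt_iff]; constructor <;> linarith)).2 htA
  have hT1 : T = 1 := by
    by_contra hne
    have hTlt : T < 1 := lt_of_le_of_ne hTmem.2 hne
    set t₁ := min 1 (T + δ/2) with ht₁def
    have ht₁Icc : t₁ ∈ Icc (0:ℝ) 1 :=
      ⟨le_min zero_le_one (by linarith [hTmem.1]), min_le_left _ _⟩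
    have hTt₁ : T < t₁ := lt_min hTlt (by linarith)
    have ht₁T : t₁ - T < δ := by
      have := min_le_right 1 (T + δ/2)
      have : t₁ ≤ T + δ/2 := min_le_right _ _
      linarith
    have ht₁A : t₁ ∈ A := (hkey t₁ ht₁Icc (by rw [abs_sub_lt_iff]; constructor <;> linarith)).1 hTA
    have : t₁ ≤ T := le_csSup hbddA ht₁A
    linarith
  rw [hT1] at hTA
  obtain ⟨_, J, ψ, _, _, hJcov1, _, hψ0, hψev⟩ := hTA
  have hval : ψ (σ 1) = f ((g 1).1, σ 1) := hψev.self_of_nhds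
  have hσ1 : σ 1 = s := by show (g 1).2 = s; rw [hg1]
  have hσ0 : σ 0 = s := by show (g 0).2 = s; rw [hg0]
  have e1 : ψ (σ 0) = f (z, s) := by rw [hψ0, hg0]
  have e2 : ψ (σ 1) = f (z', s) := by rw [hval, hσ1, hg1]
  have hfeq : f (z, s) = f (z', s) := by
    rw [← e1, ← e2, hσ0, hσ1]
  apply Complex.ext
  · exact hfeq
  · rw [him _ hzs, him _ hz's]
end

section
/- Let n ≥ 1 and let U ⊆ ℂⁿ be a bounded open set. Let f : closure(U) → ℂ be continuous on closure(U), holomorphic on U, and real-valued at every point of the frontier of U. Then f is constant on each connected component of U (and in particular f is real-valued on U). (This is the key step in the proof of the paper's Lemma 6.1: a bounded holomorphic function on a slice that is real on the slice boundary is constant.) -/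
open Complex Set Metric

/-- Key step in the paper's Lemma 6.1: a function continuous on the closure of
a bounded open set `U ⊆ ℂⁿ`, holomorphic on `U`, and real-valued on the
frontier of `U`, is constant on each connected component of `U` (in
particular, it is real-valued on `U`). -/
theorem constant_on_components_of_real_on_boundary (n : ℕ) (hn : 1 ≤ n)
    (U : Set (Fin n → ℂ)) (hUopen : IsOpen U) (hUbdd : Bornology.IsBounded U)
    (f : (Fin n → ℂ) → ℂ)
    (hcont : ContinuousOn f (closure U))
    (hholo : DifferentiableOn ℂ f U)
    (hreal : ∀ p ∈ closure U \ U, (f p).im = 0) :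
    (∀ p ∈ U, ∀ q ∈ connectedComponentIn U p, f q = f p) ∧
      (∀ p ∈ U, (f p).im = 0) := by
  haveI : Nonempty (Fin n) := ⟨⟨0, hn⟩⟩
  have hfr : ∀ p ∈ frontier U, (f p).im = 0 := by
    intro p hp
    exact hreal p (by rwa [hUopen.frontier_eq] at hp)
  -- Step 1: im f = 0 on closure U, via maximum modulus for exp(± I f).
  have him : ∀ p ∈ closure U, (f p).im = 0 := by
    have hd : ∀ c : ℂ, DiffContOnCl ℂ (fun z => Complex.exp (c * f z)) U := by
      intro c
      exact ⟨(hholo.const_mul c).cexp, (hcont.const_smul c).cexp⟩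
    have hle : ∀ c : ℂ, c.re = 0 → ∀ p ∈ closure U,
        ‖Complex.exp (c * f p)‖ ≤ 1 := by
      intro c hc p hp
      refine Complex.norm_le_of_forall_mem_frontier_norm_le hUbdd (hd c) ?_ hp
      intro z hz
      rw [Complex.norm_exp]
      have : (c * f z).re = 0 := by
        simp [Complex.mul_re, hc, hfr z hz]
      rw [this, Real.exp_zero]
    intro p hp
    have h1 := hle Complex.I (by simp) p hp
    have h2 := hle (-Complex.I) (by simp) p hp
    rw [Complex.norm_exp] at h1 h2
    have e1 : (Complex.I * f p).re = -(f p).im := by simp [Complex.mul_re]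
    have e2 : (-Complex.I * f p).re = (f p).im := by simp [Complex.mul_re]
    rw [e1] at h1
    rw [e2] at h2
    have g1 := Real.exp_le_exp.mp (h1.trans_eq Real.exp_zero.symm)
    have g2 := Real.exp_le_exp.mp (h2.trans_eq Real.exp_zero.symm)
    linarith
  have himU : ∀ p ∈ U, (f p).im = 0 := fun p hp => him p (subset_closure hp)
  -- Step 2: the derivative of f vanishes on U.
  have hfd : ∀ z ∈ U, fderiv ℂ f z = 0 := by
    intro z hz
    have hdiff : DifferentiableAt ℂ f z := hholo.differentiableAt (hUopen.mem_nhds hz)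
    have h1 : HasFDerivAt f ((fderiv ℂ f z).restrictScalars ℝ) z :=
      hdiff.hasFDerivAt.restrictScalars ℝ
    have h2 : HasFDerivAt (fun w => (f w).im)
        (Complex.imCLM.comp ((fderiv ℂ f z).restrictScalars ℝ)) z :=
      Complex.imCLM.hasFDerivAt.comp z h1
    have hg : (fun w => (f w).im) =ᶠ[nhds z] fun _ => (0 : ℝ) :=
      (hUopen.eventually_mem hz).mono fun w hw => himU w hw
    have h0 : HasFDerivAt (fun w => (f w).im)
        (0 : (Fin n → ℂ) →L[ℝ] ℝ) z :=
      (hasFDerivAt_const (0 : ℝ) z).congr_of_eventuallyEq hg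
    have heq := h2.unique h0
    have hvim : ∀ v, ((fderiv ℂ f z) v).im = 0 := by
      intro v
      have := congrFun (congrArg DFunLike.coe heq) v
      simpa using this
    ext v
    have hre : ((fderiv ℂ f z) v).re = 0 := by
      have := hvim (Complex.I • v)
      rw [ContinuousLinearMap.map_smul, smul_eq_mul, Complex.mul_im] at this
      simpa using this
    simp only [ContinuousLinearMap.zero_apply]
    exact Complex.ext hre (hvim v)
  -- Step 3: f is locally constant on U, hence constant on connected components.
  have hloc : ∀ z ∈ U, ∀ᶠ w in nhds z, f w = f z := by
    intro z hz
    rcases Metric.isOpen_iff.mp hUopen z hz with ⟨ε, hε, hball⟩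
    filter_upwards [Metric.ball_mem_nhds z hε] with w hw
    refine (convex_ball z ε).is_const_of_fderivWithin_eq_zero
      (hholo.mono hball) ?_ hw (Metric.mem_ball_self hε)
    intro x hx
    rw [fderivWithin_of_isOpen Metric.isOpen_ball hx]
    exact hfd x (hball hx)
  have hconst : ∀ p ∈ U, ∀ q ∈ connectedComponentIn U p, f q = f p := by
    intro p hp q hq
    set V := connectedComponentIn U p with hV
    have hVU : V ⊆ U := connectedComponentIn_subset U p
    have hVconn : IsPreconnected V :=
      (isConnected_connectedComponentIn_iff.mpr hp).isPreconnected
    have hpV : p ∈ V := mem_connectedComponentIn hp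
    by_contra hne
    -- S = points of V where f = f p, T = points of U where f ≠ f p; both open.
    have hS : IsOpen {w | w ∈ U ∧ f w = f p} := by
      rw [isOpen_iff_mem_nhds]
      rintro w ⟨hwU, hwf⟩
      filter_upwards [hloc w hwU, hUopen.mem_nhds hwU] with x hx hxU
      exact ⟨hxU, hx.trans hwf⟩
    have hT : IsOpen {w | w ∈ U ∧ f w ≠ f p} := by
      rw [isOpen_iff_mem_nhds]
      rintro w ⟨hwU, hwf⟩
      filter_upwards [hloc w hwU, hUopen.mem_nhds hwU] with x hx hxU
      exact ⟨hxU, by rw [hx]; exact hwf⟩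
    have hcover : V ⊆ {w | w ∈ U ∧ f w = f p} ∪ {w | w ∈ U ∧ f w ≠ f p} := by
      intro w hw
      by_cases h : f w = f p
      · exact Or.inl ⟨hVU hw, h⟩
      · exact Or.inr ⟨hVU hw, h⟩
    have h1 : (V ∩ {w | w ∈ U ∧ f w = f p}).Nonempty := ⟨p, hpV, hVU hpV, rfl⟩
    have h2 : (V ∩ {w | w ∈ U ∧ f w ≠ f p}).Nonempty := ⟨q, hq, hVU hq, hne⟩
    rcases hVconn _ _ hS hT hcover h1 h2 with ⟨x, _, ⟨_, hx1⟩, ⟨_, hx2⟩⟩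
    exact hx2 hx1
  exact ⟨hconst, himU⟩
end

section
/- Let 0 < r < 1 < R be real numbers with r·R ≠ 1, and let A = {z ∈ ℂ : r < |z| < R} be the open annulus. The holomorphic function f(z) = z + 1/z (defined on ℂ \ {0}) is injective on the frontier of A (the two circles |z| = r and |z| = R), but f is not injective on A. (This is the paper's counterexample, after Lemma 7.3, showing that connectedness of the boundary is necessary in the one-variable boundary-injectivity lemma.) -/
/-- Paper's counterexample after Lemma 7.3: for the annulus
`A = {r < |z| < R}` with `0 < r < 1 < R` and `rR ≠ 1`, the function
`f(z) = z + 1/z` is injective on the frontier of `A` (the two boundary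
circles) but not injective on `A`. -/
theorem annulus_counterexample (r R : ℝ) (hr : 0 < r) (hr1 : r < 1) (hR1 : 1 < R)
    (hrR : r * R ≠ 1) :
    Set.InjOn (fun z : ℂ => z + z⁻¹)
        ({z : ℂ | ‖z‖ = r} ∪ {z : ℂ | ‖z‖ = R}) ∧
      ¬ Set.InjOn (fun z : ℂ => z + z⁻¹)
        {z : ℂ | r < ‖z‖ ∧ ‖z‖ < R} := by
  have hR0 : (0:ℝ) < R := lt_trans one_pos hR1
  constructor
  · intro z hz w hw h
    simp only [Set.mem_union, Set.mem_setOf_eq] at hz hw h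
    have hz0 : z ≠ 0 := by
      rcases hz with h1 | h1 <;> intro h0 <;> rw [h0] at h1 <;> simp at h1 <;> linarith
    have hw0 : w ≠ 0 := by
      rcases hw with h1 | h1 <;> intro h0 <;> rw [h0] at h1 <;> simp at h1 <;> linarith
    have key : (z - w) * (z * w - 1) = 0 := by
      field_simp at h
      linear_combination h
    rcases mul_eq_zero.mp key with h0 | h0
    · exact sub_eq_zero.mp h0
    · exfalso
      have hzw : z * w = 1 := sub_eq_zero.mp h0
      have habs : ‖z‖ * ‖w‖ = 1 := by
        rw [← norm_mul, hzw, norm_one]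
      rcases hz with h1 | h1 <;> rcases hw with h2 | h2 <;> rw [h1, h2] at habs
      · nlinarith
      · exact hrR habs
      · exact hrR (by linarith [mul_comm R r])
      · nlinarith
  · intro hinj
    set ρ : ℝ := (max r R⁻¹ + 1) / 2 with hρdef
    have hmax1 : max r R⁻¹ < 1 := by
      apply max_lt hr1
      rw [inv_lt_one_iff₀]; right; exact hR1
    have hρ1 : ρ < 1 := by
      rw [hρdef]; linarith
    have hρpos : 0 < ρ := by
      have : 0 < max r R⁻¹ := lt_max_of_lt_left hr
      rw [hρdef]; linarith
    have hrρ : r < ρ := by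
      have : r ≤ max r R⁻¹ := le_max_left _ _
      rw [hρdef]; linarith [max_lt hr1 (by rw [inv_lt_one_iff₀]; right; exact hR1 : R⁻¹ < 1)]
    have hRρ : R⁻¹ < ρ := by
      have : R⁻¹ ≤ max r R⁻¹ := le_max_right _ _
      rw [hρdef]; linarith
    have hinvρ : ρ⁻¹ < R := by
      rw [inv_lt_comm₀ hρpos hR0]; exact hRρ
    have h1ρ : 1 < ρ⁻¹ := by
      rw [lt_inv_comm₀ one_pos hρpos]; simpa using hρ1
    have hmem1 : (↑ρ : ℂ) ∈ {z : ℂ | r < ‖z‖ ∧ ‖z‖ < R} := by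
      simp only [Set.mem_setOf_eq, Complex.norm_real, Real.norm_eq_abs, abs_of_pos hρpos]
      exact ⟨hrρ, by linarith⟩
    have hmem2 : ((↑ρ : ℂ))⁻¹ ∈ {z : ℂ | r < ‖z‖ ∧ ‖z‖ < R} := by
      simp only [Set.mem_setOf_eq, norm_inv, Complex.norm_real, Real.norm_eq_abs, abs_of_pos hρpos]
      exact ⟨by linarith, hinvρ⟩
    have heq : (fun z : ℂ => z + z⁻¹) (↑ρ) = (fun z : ℂ => z + z⁻¹) ((↑ρ:ℂ))⁻¹ := by
      simp [add_comm]
    have := hinj hmem1 hmem2 heq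
    have : (ρ : ℂ) = ((ρ : ℂ))⁻¹ := this
    have hcontr : ρ = ρ⁻¹ := by
      have := congrArg Complex.re this
      simpa [Complex.inv_re, Complex.normSq_ofReal, div_eq_iff, ne_of_gt hρpos] using this
    nlinarith
end
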